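/- For 0 < δ < 1, the integral T(2, δ) := ∫₀^∞ (1 - (1 + r^{-1/δ})^{-2}) dr equals (1+δ)·πδ/sin(πδ). -/

import Mathlib

open MeasureTheory Set

lemma realBeta_cast (a b x : ℝ) (hx0 : 0 ≤ x) (hx1 : x ≤ 1) :
    ((x:ℂ)) ^ ((a:ℂ) - 1) * (1 - (x:ℂ)) ^ ((b:ℂ) - 1)
      = ((x ^ (a-1) * (1-x) ^ (b-1) : ℝ) : ℂ) := by
  rw [Complex.ofReal_mul, Complex.ofReal_cpow hx0,
    Complex.ofReal_cpow (by linarith : (0:ℝ) ≤ 1 - x)]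
  push_cast
  ring

lemma realBeta_eq_complex (a b : ℝ) (ha : 0 < a) (hb : 0 < b) :
    Complex.betaIntegral a b
      = ((∫ x in Ioo (0:ℝ) 1, x ^ (a-1) * (1-x) ^ (b-1)) : ℝ) := by
  rw [Complex.betaIntegral, intervalIntegral.integral_of_le zero_le_one,
    ← MeasureTheory.integral_Ioc_eq_integral_Ioo]
  calc ∫ x in Ioc (0:ℝ) 1, (x:ℂ) ^ ((a:ℂ) - 1) * (1 - (x:ℂ)) ^ ((b:ℂ) - 1)
      = ∫ x in Ioc (0:ℝ) 1, ((x ^ (a-1) * (1-x) ^ (b-1) : ℝ) : ℂ) :=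
        setIntegral_congr_fun measurableSet_Ioc fun x hx =>
          realBeta_cast a b x hx.1.le hx.2
    _ = ((∫ x in Ioc (0:ℝ) 1, x ^ (a-1) * (1-x) ^ (b-1)) : ℝ) := integral_ofReal

lemma realBeta_integrable (a b : ℝ) (ha : 0 < a) (hb : 0 < b) :
    IntegrableOn (fun x : ℝ => x ^ (a-1) * (1-x) ^ (b-1)) (Ioo (0:ℝ) 1) := by
  have h := (Complex.betaIntegral_convergent (u := (a:ℂ)) (v := (b:ℂ))
      (by simpa using ha) (by simpa using hb))
  rw [intervalIntegrable_iff_integrableOn_Ioc_of_le zero_le_one] at h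
  have h2 : IntegrableOn
      (fun x : ℝ => ((x:ℂ) ^ ((a:ℂ) - 1) * (1 - (x:ℂ)) ^ ((b:ℂ) - 1)).re)
      (Ioo (0:ℝ) 1) := (h.mono_set Ioo_subset_Ioc_self).re
  refine (h2.congr_fun (fun x hx => ?_) measurableSet_Ioo)
  dsimp only
  rw [realBeta_cast a b x hx.1.le hx.2.le, Complex.ofReal_re]

lemma realBeta (a b : ℝ) (ha : 0 < a) (hb : 0 < b) :
    (∫ x in Ioo (0:ℝ) 1, x ^ (a-1) * (1-x) ^ (b-1))
      = Real.Gamma a * Real.Gamma b / Real.Gamma (a+b) := by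
  have key := Complex.Gamma_mul_Gamma_eq_betaIntegral (s := (a:ℂ)) (t := (b:ℂ))
    (by simpa using ha) (by simpa using hb)
  rw [realBeta_eq_complex a b ha hb] at key
  rw [show ((a:ℂ) + b) = ((a + b : ℝ) : ℂ) by push_cast; ring] at key
  rw [Complex.Gamma_ofReal, Complex.Gamma_ofReal, Complex.Gamma_ofReal] at key
  have key2 : Real.Gamma a * Real.Gamma b
      = Real.Gamma (a+b) * ∫ x in Ioo (0:ℝ) 1, x ^ (a-1) * (1-x) ^ (b-1) := by
    exact_mod_cast key
  have hG : Real.Gamma (a+b) ≠ 0 := (Real.Gamma_pos_of_pos (by linarith)).ne'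
  field_simp [key2]
  rw [key2]; ring

theorem stmt5 (δ : ℝ) (hδ : 0 < δ) (hδ1 : δ < 1) :
    (∫ r in Ioi (0 : ℝ), (1 - (1 + r ^ (-1 / δ)) ^ (-(2 : ℝ))))
      = (1 + δ) * Real.pi * δ / Real.sin (Real.pi * δ) := by
  have hδ0 : δ ≠ 0 := hδ.ne'
  set f : ℝ → ℝ := fun x => (x / (1-x)) ^ δ with hf
  set F : ℝ → ℝ := fun x => ((1-x)^2)⁻¹ * δ * (x / (1-x)) ^ (δ - 1) with hF
  -- the image of (0,1) under f is (0,∞)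
  have himg : f '' Ioo 0 1 = Ioi 0 := by
    apply Subset.antisymm
    · rintro y ⟨x, hx, rfl⟩
      have ht : 0 < x / (1-x) := div_pos hx.1 (by linarith [hx.2])
      exact Real.rpow_pos_of_pos ht δ
    · intro y hy
      have hy0 : (0:ℝ) < y := hy
      set u : ℝ := y ^ (1/δ) with hu
      have hu0 : 0 < u := Real.rpow_pos_of_pos hy0 _
      refine ⟨u / (1+u), ⟨div_pos hu0 (by linarith), by
        rw [div_lt_one (by linarith)]; linarith⟩, ?_⟩
      have h1u : (0:ℝ) < 1 + u := by linarith
      have hsub : (1 : ℝ) - u / (1+u) = 1 / (1+u) := by field_simp; ring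
      have hquot : u / (1+u) / ((1:ℝ) / (1+u)) = u := by field_simp
      simp only [hf, hsub, hquot]
      rw [hu, ← Real.rpow_mul hy0.le, one_div, inv_mul_cancel₀ hδ0, Real.rpow_one]
  -- derivative
  have hderiv : ∀ x ∈ Ioo (0:ℝ) 1, HasDerivWithinAt f (F x) (Ioo 0 1) x := by
    intro x hx
    have h1x : (0:ℝ) < 1 - x := by linarith [hx.2]
    have ht : 0 < x / (1-x) := div_pos hx.1 h1x
    have hbase : HasDerivAt (fun x : ℝ => x / (1-x)) (((1-x)^2)⁻¹) x := by
      have h1 : HasDerivAt (fun x : ℝ => x) 1 x := hasDerivAt_id x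
      have h2 : HasDerivAt (fun x : ℝ => 1 - x) (-1) x := by
        simpa using (hasDerivAt_id' x).const_sub (1:ℝ)
      have := h1.div h2 h1x.ne'
      rw [show ((1-x)^2)⁻¹ = (1 * (1 - x) - x * -1) / (1 - x) ^ 2 by ring]
      exact this
    have hcomp := hbase.rpow_const (p := δ) (Or.inl ht.ne')
    have heq : ((1-x)^2)⁻¹ * δ * (x / (1-x)) ^ (δ - 1) = F x := by rw [hF]
    rw [← heq] at *
    exact hcomp.hasDerivWithinAt
  -- injectivity
  have hinj : InjOn f (Ioo 0 1) := by
    intro a ha b hb hab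
    have h1a : (0:ℝ) < 1 - a := by linarith [ha.2]
    have h1b : (0:ℝ) < 1 - b := by linarith [hb.2]
    have hta : 0 < a / (1-a) := div_pos ha.1 h1a
    have htb : 0 < b / (1-b) := div_pos hb.1 h1b
    have h2 : a / (1-a) = b / (1-b) := by
      have h3 := congrArg (fun z : ℝ => z ^ (1/δ)) hab
      simp only [hf] at h3
      rwa [← Real.rpow_mul hta.le, ← Real.rpow_mul htb.le,
        mul_one_div, div_self hδ0, Real.rpow_one, Real.rpow_one] at h3
    rw [div_eq_div_iff h1a.ne' h1b.ne'] at h2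
    nlinarith
  have key := integral_image_eq_integral_abs_deriv_smul measurableSet_Ioo hderiv hinj
      (fun r : ℝ => 1 - (1 + r ^ (-1 / δ)) ^ (-(2:ℝ)))
  rw [himg] at key
  rw [key]
  -- simplify the integrand
  have hcong : ∀ x ∈ Ioo (0:ℝ) 1,
      |F x| • (1 - (1 + (f x) ^ (-1 / δ)) ^ (-(2:ℝ)))
        = δ * (x ^ (δ - 1) * (1-x) ^ (1 - δ - 1))
          + δ * (x ^ (1 + δ - 1) * (1-x) ^ (1 - δ - 1)) := by
    intro x hx
    have hx0 : (0:ℝ) < x := hx.1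
    have h1x : (0:ℝ) < 1 - x := by linarith [hx.2]
    have ht : 0 < x / (1-x) := div_pos hx0 h1x
    simp only [hf, hF]
    have hFpos : 0 < ((1-x)^2)⁻¹ * δ * (x / (1-x)) ^ (δ - 1) := by
      have h5 : 0 < (x / (1-x)) ^ (δ - 1) := Real.rpow_pos_of_pos ht _
      positivity
    rw [abs_of_pos hFpos, smul_eq_mul]
    have hfx : ((x / (1-x)) ^ δ) ^ (-1 / δ) = (1-x) / x := by
      rw [← Real.rpow_mul ht.le, mul_comm δ (-1/δ), div_mul_cancel₀ _ hδ0,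
        Real.rpow_neg_one, inv_div]
    rw [hfx]
    have h1 : (1 : ℝ) + (1-x)/x = x⁻¹ := by field_simp; ring
    rw [h1]
    have h2 : (x⁻¹ : ℝ) ^ (-(2:ℝ)) = x ^ 2 := by
      rw [← Real.rpow_neg_one x, ← Real.rpow_mul hx0.le]
      norm_num
    rw [h2]
    have hx2 : (1:ℝ) - x ^ 2 = (1-x) * (1+x) := by ring
    rw [hx2]
    -- now pure rpow algebra
    have hdiv : (x / (1-x)) ^ (δ - 1) = x ^ (δ - 1) * ((1-x) ^ (δ - 1))⁻¹ := by
      rw [Real.div_rpow hx0.le h1x.le, div_eq_mul_inv]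
    rw [hdiv]
    have hA : ((1-x)^2)⁻¹ = (1-x) ^ (-2 : ℝ) := by
      rw [show ((-2):ℝ) = -((2:ℕ):ℝ) by norm_num, Real.rpow_neg h1x.le,
        Real.rpow_natCast]
    have hB : ((1-x) ^ (δ - 1))⁻¹ = (1-x) ^ (1 - δ : ℝ) := by
      rw [← Real.rpow_neg h1x.le]
      norm_num
    have hC : (1 - x : ℝ) = (1-x) ^ (1 : ℝ) := by rw [Real.rpow_one]
    have hcomb : (1-x) ^ (-2 : ℝ) * (1-x) ^ (1 - δ : ℝ) * (1-x) ^ (1:ℝ)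
        = (1-x) ^ (1 - δ - 1 : ℝ) := by
      rw [← Real.rpow_add h1x, ← Real.rpow_add h1x]
      congr 1
      ring
    have hxpow : x * x ^ (δ - 1) = x ^ (1 + δ - 1 : ℝ) := by
      rw [show (1 + δ - 1 : ℝ) = 1 + (δ - 1) by ring, Real.rpow_add hx0, Real.rpow_one]
    calc ((1-x)^2)⁻¹ * δ * (x ^ (δ - 1) * ((1-x) ^ (δ - 1))⁻¹) * ((1-x) * (1+x))
        = δ * (x ^ (δ - 1) + x * x ^ (δ - 1))
            * ((1-x) ^ (-2 : ℝ) * (1-x) ^ (1 - δ : ℝ) * (1-x) ^ (1:ℝ)) := by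
          rw [← hA, ← hB, ← hC]; ring
      _ = δ * (x ^ (δ - 1) + x ^ (1 + δ - 1 : ℝ)) * (1-x) ^ (1 - δ - 1 : ℝ) := by
          rw [hcomb, hxpow]
      _ = _ := by ring
  rw [setIntegral_congr_fun measurableSet_Ioo hcong]
  have hint1 : IntegrableOn
      (fun x : ℝ => δ * (x ^ (δ - 1) * (1-x) ^ (1 - δ - 1))) (Ioo (0:ℝ) 1) :=
    (realBeta_integrable δ (1-δ) hδ (by linarith)).const_mul δ
  have hint2 : IntegrableOn
      (fun x : ℝ => δ * (x ^ (1 + δ - 1) * (1-x) ^ (1 - δ - 1))) (Ioo (0:ℝ) 1) :=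
    (realBeta_integrable (1+δ) (1-δ) (by linarith) (by linarith)).const_mul δ
  rw [integral_add hint1 hint2, integral_const_mul, integral_const_mul,
    realBeta δ (1-δ) hδ (by linarith), realBeta (1+δ) (1-δ) (by linarith) (by linarith)]
  have e1 : δ + (1 - δ) = 1 := by ring
  have e2 : 1 + δ + (1 - δ) = 2 := by ring
  rw [e1, e2, Real.Gamma_one]
  have hG2 : Real.Gamma 2 = 1 := by
    rw [show (2:ℝ) = 1 + 1 by norm_num, Real.Gamma_add_one one_ne_zero, Real.Gamma_one, mul_one]
  have hG1δ : Real.Gamma (1 + δ) = δ * Real.Gamma δ := by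
    rw [add_comm, Real.Gamma_add_one hδ0]
  rw [hG2, hG1δ]
  have hrefl : Real.Gamma δ * Real.Gamma (1-δ) = Real.pi / Real.sin (Real.pi * δ) :=
    Real.Gamma_mul_Gamma_one_sub δ
  rw [div_one, div_one]
  linear_combination (δ + δ * δ) * hrefl
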